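/- Let f, n, m be natural numbers with n > 3f and m ≥ n − f. Let P be a multiset of real numbers with card P = n and let U be a sub-multiset of P with card U = m. Then for every x ∈ U, the distance between the robot's position and its computed destination satisfies |x − D(x, P)| ≤ (max U − min U)/2, where D(x, P) = (min(x, P_(f+1)) + max(x, P_(n−f)))/2. (A robot never computes a destination farther from its current position than half the diameter of the correct positions.) -/

import Mathlib

/-- The k-th smallest element (1-indexed, counted with multiplicity) of a
multiset of real numbers. -/
noncomputable def nth (S : Multiset ℝ) (k : ℕ) : ℝ :=
  (S.sort (· ≤ ·)).getD (k - 1) 0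

/-- The smallest element of a (nonempty) multiset of reals. -/
noncomputable def mmin (S : Multiset ℝ) : ℝ := nth S 1

/-- The largest element of a (nonempty) multiset of reals. -/
noncomputable def mmax (S : Multiset ℝ) : ℝ := nth S S.card

/-- The diameter of a (nonempty) multiset of reals. -/
noncomputable def mdiam (S : Multiset ℝ) : ℝ := mmax S - mmin S

lemma sorted_le {l : List ℝ} (h : l.Pairwise (· ≤ ·)) {i j : ℕ} (hij : i ≤ j)
    (hj : j < l.length) : l[i]'(lt_of_le_of_lt hij hj) ≤ l[j] := by
  rcases lt_or_eq_of_le hij with h' | rfl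
  · exact h.rel_get_of_lt (a := ⟨i, lt_of_le_of_lt hij hj⟩) (b := ⟨j, hj⟩) h'
  · exact le_refl _

lemma mmin_le_mem {S : Multiset ℝ} {x : ℝ} (h : x ∈ S) : mmin S ≤ x := by
  have hx : x ∈ S.sort (· ≤ ·) := (Multiset.mem_sort _).mpr h
  obtain ⟨i, hi, rfl⟩ := List.mem_iff_getElem.mp hx
  have h0 : 0 < (S.sort (· ≤ ·)).length := Nat.lt_of_le_of_lt (Nat.zero_le i) hi
  unfold mmin nth
  rw [List.getD_eq_getElem _ _ (by simpa using h0)]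
  exact sorted_le (S.pairwise_sort _) (Nat.zero_le i) hi

lemma mem_le_mmax {S : Multiset ℝ} {x : ℝ} (h : x ∈ S) : x ≤ mmax S := by
  have hx : x ∈ S.sort (· ≤ ·) := (Multiset.mem_sort _).mpr h
  obtain ⟨i, hi, rfl⟩ := List.mem_iff_getElem.mp hx
  have hlen : (S.sort (· ≤ ·)).length = Multiset.card S := S.length_sort _
  have h0 : 0 < (S.sort (· ≤ ·)).length := Nat.lt_of_le_of_lt (Nat.zero_le i) hi
  unfold mmax nth
  rw [← hlen, List.getD_eq_getElem _ _ (by omega)]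
  exact sorted_le (S.pairwise_sort _) (by omega) (by omega)

theorem stmt4 (f n m : ℕ) (P U : Multiset ℝ)
    (hn : n > 3 * f) (hm : m ≥ n - f)
    (hP : Multiset.card P = n) (hU : U ≤ P) (hUm : Multiset.card U = m) :
    ∀ x ∈ U,
      |x - (min x (nth P (f + 1)) + max x (nth P (n - f))) / 2| ≤
        (mmax U - mmin U) / 2 := by
  classical
  intro x hx
  set l := P.sort (· ≤ ·) with hldef
  have hsort : l.Pairwise (· ≤ ·) := P.pairwise_sort _
  have hlen : l.length = n := by rw [hldef, Multiset.length_sort]; exact hP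
  have hmpos : 0 < m := by
    rw [← hUm]; exact Multiset.card_pos_iff_exists_mem.mpr ⟨x, hx⟩
  have hnm : n - m ≤ f := by omega
  have hf : f < l.length := by omega
  have hnf : n - f - 1 < l.length := by omega
  have ha : nth P (f + 1) = l[f] := by
    unfold nth; rw [← hldef]; simp only [Nat.add_sub_cancel]
    exact List.getD_eq_getElem _ _ hf
  have hb : nth P (n - f) = l[n - f - 1] := by
    unfold nth; rw [← hldef]
    exact List.getD_eq_getElem _ _ hnf
  have hminx : mmin U ≤ x := mmin_le_mem hx
  have hmaxx : x ≤ mmax U := mem_le_mmax hx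
  -- cardinality of P - U
  have hcardPU : Multiset.card (P - U) = n - m := by
    rw [Multiset.card_sub hU, hP, hUm]
  have hPsplit : U + (P - U) = P := by
    rw [add_comm]; exact tsub_add_cancel_of_le hU
  -- key claim 1 : mmin U ≤ l[f]
  have h1 : mmin U ≤ l[f] := by
    by_contra hlt
    push_neg at hlt
    set p : ℝ → Prop := fun y => y < mmin U with hp
    have hT : (↑(l.take (f + 1)) : Multiset ℝ) ≤ P := by
      rw [← Multiset.sort_eq P (· ≤ ·), ← hldef]
      exact Multiset.coe_le.mpr (l.take_sublist _).subperm
    have hTall : ∀ y ∈ (↑(l.take (f + 1)) : Multiset ℝ), p y := by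
      intro y hy
      rw [Multiset.mem_coe] at hy
      obtain ⟨i, hi, rfl⟩ := List.mem_iff_getElem.mp hy
      rw [List.getElem_take]
      have hif : i < f + 1 := by
        have := hi; rw [List.length_take] at this; omega
      exact lt_of_le_of_lt (sorted_le hsort (by omega) hf) hlt
    have hcount1 : f + 1 ≤ Multiset.countP p P := by
      have := Multiset.countP_le_of_le p hT
      rw [Multiset.countP_eq_card.mpr hTall] at this
      refine le_trans ?_ this; simp; omega
    have hcount2 : Multiset.countP p P ≤ f := by
      rw [← hPsplit, Multiset.countP_add]
      have hU0 : Multiset.countP p U = 0 := by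
        rw [Multiset.countP_eq_zero]
        intro y hy
        exact not_lt.mpr (mmin_le_mem hy)
      rw [hU0, zero_add]
      calc Multiset.countP p (P - U) ≤ Multiset.card (P - U) := Multiset.countP_le_card _ _
        _ ≤ f := by rw [hcardPU]; exact hnm
    omega
  -- key claim 2 : l[n-f-1] ≤ mmax U
  have h2 : l[n - f - 1] ≤ mmax U := by
    by_contra hlt
    push_neg at hlt
    set p : ℝ → Prop := fun y => mmax U < y with hp
    have hT : (↑(l.drop (n - f - 1)) : Multiset ℝ) ≤ P := by
      rw [← Multiset.sort_eq P (· ≤ ·), ← hldef]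
      exact Multiset.coe_le.mpr (l.drop_sublist _).subperm
    have hTall : ∀ y ∈ (↑(l.drop (n - f - 1)) : Multiset ℝ), p y := by
      intro y hy
      rw [Multiset.mem_coe] at hy
      obtain ⟨i, hi, rfl⟩ := List.mem_iff_getElem.mp hy
      rw [List.getElem_drop]
      exact lt_of_lt_of_le hlt (sorted_le hsort (by omega) (by rw [List.length_drop] at hi; omega))
    have hcount1 : f + 1 ≤ Multiset.countP p P := by
      have := Multiset.countP_le_of_le p hT
      rw [Multiset.countP_eq_card.mpr hTall] at this
      refine le_trans ?_ this; simp [List.length_drop, hlen]; omega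
    have hcount2 : Multiset.countP p P ≤ f := by
      rw [← hPsplit, Multiset.countP_add]
      have hU0 : Multiset.countP p U = 0 := by
        rw [Multiset.countP_eq_zero]
        intro y hy
        exact not_lt.mpr (mem_le_mmax hy)
      rw [hU0, zero_add]
      calc Multiset.countP p (P - U) ≤ Multiset.card (P - U) := Multiset.countP_le_card _ _
        _ ≤ f := by rw [hcardPU]; exact hnm
    omega
  rw [ha, hb]
  have hA1 : min x l[f] ≤ x := min_le_left _ _
  have hA2 : mmin U ≤ min x l[f] := le_min hminx h1
  have hB1 : x ≤ max x l[n - f - 1] := le_max_left _ _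
  have hB2 : max x l[n - f - 1] ≤ mmax U := max_le hmaxx h2
  rw [abs_le]
  constructor <;> [linarith; linarith]
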